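/- There exist constants C₁ > 0, C₂ > 0 and p₀ > 1 such that for all p ≥ p₀ one has ũ_p(s) ≤ C₁·W(s) + C₂ for every s ∈ [-1/μ_p, 1/μ_p], where W(s) = log( 4e^{√2 s} / (1 + e^{√2 s})² ). -/

import Mathlib

open Real Set Filter Topology

noncomputable section

set_option maxHeartbeats 2000000 in
lemma key_growth (p : ℝ) (hp : 2 ≤ p) (f : ℝ → ℝ)
    (hC : ContDiff ℝ 2 f)
    (hODE : ∀ t ∈ Ioo (-1 : ℝ) 1, deriv (deriv f) t = -(f t ^ p))
    (hpos : ∀ t ∈ Ioo (-1 : ℝ) 1, 0 < f t)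
    (heven : ∀ t : ℝ, f (-t) = f t) :
    ∀ t ∈ Icc (0:ℝ) 1,
      t * Real.sqrt (p * f 0 ^ (p - 1)) - 2 * Real.log 2 ≤ p * (f 0 - f t) / f 0 := by
  have hp0 : (0:ℝ) < p := by linarith
  set M := f 0 with hMdef
  have hM : 0 < M := hpos 0 (by norm_num)
  have hdf : Differentiable ℝ f := hC.differentiable (by norm_num)
  have hC' : ContDiff ℝ 1 (deriv f) := by
    have := (contDiff_succ_iff_deriv (n := 1)).mp (by norm_num; exact hC)
    exact this.2.2
  have hdg : Differentiable ℝ (deriv f) := hC'.differentiable (by norm_num)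
  set g := deriv f with hgdef
  -- g 0 = 0
  have hg0 : g 0 = 0 := by
    have h1 : HasDerivAt f (g 0) 0 := (hdf 0).hasDerivAt
    have h2 : HasDerivAt (fun t => f (-t)) (g (-(0:ℝ)) * (-1)) 0 :=
      (hdf (-(0:ℝ))).hasDerivAt.comp 0 (hasDerivAt_neg (0:ℝ))
    have h2' : HasDerivAt f (g (-(0:ℝ)) * (-1)) 0 := by
      have : (fun t => f (-t)) = f := funext heven
      rwa [this] at h2
    have := h1.unique h2'
    rw [neg_zero] at this
    linarith
  -- g < 0 on (0,1)
  have hgneg : ∀ t ∈ Ioo (0:ℝ) 1, g t < 0 := by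
    have hanti : StrictAntiOn g (Icc (0:ℝ) 1) := by
      apply strictAntiOn_of_deriv_neg (convex_Icc 0 1) hdg.continuous.continuousOn
      intro x hx
      rw [interior_Icc] at hx
      have hx' : x ∈ Ioo (-1:ℝ) 1 := ⟨by linarith [hx.1], hx.2⟩
      rw [hODE x hx']
      have := Real.rpow_pos_of_pos (hpos x hx') p
      linarith
    intro t ht
    have := hanti (Set.mem_Icc.mpr ⟨le_refl 0, by norm_num⟩)
      (Set.mem_Icc.mpr ⟨ht.1.le, ht.2.le⟩) ht.1
    rwa [hg0] at this
  -- f < M on (0,1]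
  have hfanti : StrictAntiOn f (Icc (0:ℝ) 1) := by
    apply strictAntiOn_of_deriv_neg (convex_Icc 0 1) hdf.continuous.continuousOn
    intro x hx
    rw [interior_Icc] at hx
    exact hgneg x hx
  have hfltM : ∀ t ∈ Ioc (0:ℝ) 1, f t < M :=
    fun t ht => hfanti (Set.mem_Icc.mpr ⟨le_refl 0, by norm_num⟩)
      (Set.mem_Icc.mpr ⟨ht.1.le, ht.2⟩) ht.1
  -- energy identity
  have hE_deriv : ∀ τ ∈ Ioo (-1:ℝ) 1,
      HasDerivAt (fun σ => (g σ)^2/2 + (f σ)^(p+1)/(p+1)) 0 τ := by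
    intro τ hτ
    have h1 : HasDerivAt g (deriv g τ) τ := (hdg τ).hasDerivAt
    have h2 : HasDerivAt (fun σ => (g σ)^2/2) (g τ * deriv g τ) τ := by
      have := (h1.pow 2).div_const 2
      refine this.congr_deriv ?_
      ring
    have h3 : HasDerivAt (fun σ => (f σ)^(p+1)/(p+1)) ((f τ)^p * g τ) τ := by
      have h4 : HasDerivAt (fun σ => (f σ)^(p+1)) (g τ * (p+1) * (f τ)^(p+1-1)) τ :=
        HasDerivAt.rpow_const (hdf τ).hasDerivAt (Or.inl (hpos τ hτ).ne')
      have := h4.div_const (p+1)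
      refine this.congr_deriv ?_
      have hp1 : p + 1 ≠ 0 := by linarith
      rw [show p + 1 - 1 = p by ring]
      field_simp
    have := h2.add h3
    rw [hODE τ hτ] at this
    refine this.congr_deriv ?_
    ring
  have energy : ∀ t ∈ Ico (0:ℝ) 1, (g t)^2 = 2/(p+1) * (M ^ (p+1) - f t ^ (p+1)) := by
    intro t ht
    set E : ℝ → ℝ := fun σ => (g σ)^2/2 + (f σ)^(p+1)/(p+1) with hEdef
    have hsub : Icc (0:ℝ) t ⊆ Ioo (-1:ℝ) 1 := fun x hx =>
      ⟨by linarith [hx.1], lt_of_le_of_lt hx.2 ht.2⟩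
    have hEc : ContinuousOn E (Icc (0:ℝ) t) := fun x hx =>
      ((hE_deriv x (hsub hx)).differentiableAt.continuousAt).continuousWithinAt
    have hEd : DifferentiableOn ℝ E (interior (Icc (0:ℝ) t)) := fun x hx => by
      rw [interior_Icc] at hx
      exact (hE_deriv x (hsub ⟨hx.1.le, hx.2.le⟩)).differentiableAt.differentiableWithinAt
    have hEd0 : ∀ x ∈ interior (Icc (0:ℝ) t), deriv E x = 0 := fun x hx => by
      rw [interior_Icc] at hx
      exact (hE_deriv x (hsub ⟨hx.1.le, hx.2.le⟩)).deriv
    have hmon := monotoneOn_of_deriv_nonneg (convex_Icc 0 t) hEc hEd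
      (fun x hx => (hEd0 x hx).ge)
    have hant := antitoneOn_of_deriv_nonpos (convex_Icc 0 t) hEc hEd
      (fun x hx => (hEd0 x hx).le)
    have h0t : (0:ℝ) ∈ Icc (0:ℝ) t := Set.mem_Icc.mpr ⟨le_refl 0, ht.1⟩
    have htt : t ∈ Icc (0:ℝ) t := Set.mem_Icc.mpr ⟨ht.1, le_refl t⟩
    have hEq : E t = E 0 := le_antisymm (hant h0t htt ht.1) (hmon h0t htt ht.1)
    have hE0 : E 0 = M^(p+1)/(p+1) := by
      simp only [hEdef, hg0, ← hMdef]
      norm_num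
    rw [hE0] at hEq
    simp only [hEdef] at hEq
    have h2 : g t ^ 2 = 2 * (M^(p+1)/(p+1)) - 2*(f t^(p+1)/(p+1)) := by linarith
    rw [h2]; ring
  -- setup B and q
  set B := Real.sqrt (p * M ^ (p-1)) with hBdef
  have hMP : (0:ℝ) < M ^ (p-1) := Real.rpow_pos_of_pos hM _
  have hB : 0 < B := Real.sqrt_pos.mpr (by positivity)
  have hB2 : B^2 = p * M^(p-1) := Real.sq_sqrt (by positivity)
  set q : ℝ → ℝ := fun τ => p * (M - f τ) / M with hqdef
  set F : ℝ → ℝ := fun τ =>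
    (q τ + 2 * Real.log (1 + Real.sqrt (1 - Real.exp (-q τ)))) - τ * B with hFdef
  -- derivative of F is nonneg on (0,1)
  have hFd : ∀ x ∈ Ioo (0:ℝ) 1, ∃ d, HasDerivAt F d x ∧ 0 ≤ d := by
    intro x hx
    have hx1 : x ∈ Ioo (-1:ℝ) 1 := ⟨by linarith [hx.1], hx.2⟩
    have hfx : 0 < f x := hpos x hx1
    have hfxM : f x < M := hfltM x ⟨hx.1, hx.2.le⟩
    have hqx : 0 < q x := by
      have h : 0 < M - f x := by linarith
      exact div_pos (mul_pos hp0 h) hM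
    set e := Real.exp (-q x) with hedef
    have he1 : e < 1 := Real.exp_lt_one_iff.mpr (by linarith)
    have hepos : 0 < e := Real.exp_pos _
    have h1e : 0 < 1 - e := by linarith
    set y := Real.sqrt (1 - e) with hydef
    have hy : 0 < y := Real.sqrt_pos.mpr h1e
    have hy2 : y^2 = 1 - e := Real.sq_sqrt h1e.le
    have hq : HasDerivAt q (p * (0 - g x) / M) x :=
      (((hasDerivAt_const x M).sub (hdf x).hasDerivAt).const_mul p).div_const M
    set qd := p * (0 - g x) / M with hqddef
    have hgx : g x < 0 := hgneg x hx
    have hqdpos : 0 < qd := by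
      rw [hqddef]
      have : 0 < 0 - g x := by linarith
      positivity
    -- energy-based bound : B * y ≤ qd
    have key3 : B * y ≤ qd := by
      have hen := energy x ⟨hx.1.le, hx.2⟩
      -- claim1 : f x ^ (p+1) ≤ e * M^(p+1)
      have claim1 : f x ^ (p+1) ≤ e * M^(p+1) := by
        set r := f x / M with hrdef
        have hr0 : 0 < r := by positivity
        have hr1 : r < 1 := (div_lt_one hM).mpr hfxM
        have h1 : r ≤ Real.exp (r - 1) := by
          have := Real.add_one_le_exp (r - 1)
          linarith
        have h2 : r ^ (p+1) ≤ Real.exp (r-1) ^ (p+1) :=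
          Real.rpow_le_rpow hr0.le h1 (by linarith)
        have h3 : Real.exp (r-1) ^ (p+1) = Real.exp ((r-1)*(p+1)) := (Real.exp_mul _ _).symm
        have h4 : Real.exp ((r-1)*(p+1)) ≤ Real.exp ((r-1)*p) := by
          apply Real.exp_le_exp.mpr
          nlinarith
        have h5 : (r-1)*p = -q x := by
          simp only [hqdef, hrdef]
          field_simp
          ring
        have h6 : r ^ (p+1) ≤ e := by
          rw [hedef, ← h5]
          calc r ^ (p+1) ≤ Real.exp (r-1) ^ (p+1) := h2
            _ = Real.exp ((r-1)*(p+1)) := h3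
            _ ≤ Real.exp ((r-1)*p) := h4
        have h7 : f x ^ (p+1) = r ^ (p+1) * M ^ (p+1) := by
          rw [hrdef, ← Real.mul_rpow (by positivity) hM.le]
          congr 1
          field_simp
        rw [h7]
        exact mul_le_mul_of_nonneg_right h6 (by positivity)
      -- now the squared inequality
      have hMsplit : M^(p+1) = M^(p-1) * M^2 := by
        rw [← Real.rpow_natCast M 2, ← Real.rpow_add hM]
        ring_nf
      have hM2 : (0:ℝ) < M^2 := by positivity
      have hp1' : (0:ℝ) < p + 1 := by linarith
      have hqd2 : qd^2 = p^2 * (2/(p+1) * (M^(p+1) - f x ^ (p+1))) / M^2 := by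
        rw [hqddef]
        rw [show (p * (0 - g x) / M)^2 = p^2 * (g x ^ 2) / M^2 by ring, hen]
      have hBy2 : (B*y)^2 = p * M^(p-1) * (1 - e) := by
        rw [mul_pow, hB2, hy2]
      have h8 : M^(p-1) * M^2 * (1 - e) ≤ M^(p+1) - f x ^ (p+1) := by
        rw [← hMsplit]; nlinarith [claim1]
      have hfac : (0:ℝ) ≤ M^(p-1) * M^2 * (1-e) :=
        mul_nonneg (mul_nonneg hMP.le hM2.le) h1e.le
      have hcoef : p*(p+1) ≤ p^2*2 := by nlinarith
      have hsq : (B*y)^2 ≤ qd^2 := by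
        rw [hqd2, hBy2]
        rw [show p^2 * (2/(p+1) * (M^(p+1) - f x ^ (p+1))) / M^2
            = (p^2 * 2 * (M^(p+1) - f x ^ (p+1))) / ((p+1) * M^2) by field_simp]
        rw [le_div_iff₀ (by positivity)]
        nlinarith [mul_le_mul_of_nonneg_right hcoef hfac,
          mul_le_mul_of_nonneg_left h8 (by positivity : (0:ℝ) ≤ p^2*2)]
      nlinarith [hsq, hqdpos, mul_nonneg hB.le hy.le]
    -- derivative computation
    have hexp : HasDerivAt (fun τ => Real.exp (-q τ)) (Real.exp (-q x) * (-qd)) x :=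
      (hq.neg).exp
    have h1me : HasDerivAt (fun τ => 1 - Real.exp (-q τ)) (0 - Real.exp (-q x) * (-qd)) x :=
      (hasDerivAt_const x 1).sub hexp
    have hs : HasDerivAt (fun τ => Real.sqrt (1 - Real.exp (-q τ)))
        ((0 - Real.exp (-q x) * (-qd)) / (2 * Real.sqrt (1 - Real.exp (-q x)))) x :=
      h1me.sqrt h1e.ne'
    have hl : HasDerivAt (fun τ => Real.log (1 + Real.sqrt (1 - Real.exp (-q τ))))
        ((0 + (0 - Real.exp (-q x) * (-qd)) / (2 * Real.sqrt (1 - Real.exp (-q x)))) /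
          (1 + Real.sqrt (1 - Real.exp (-q x)))) x :=
      ((hasDerivAt_const x 1).add hs).log (ne_of_gt (add_pos_of_pos_of_nonneg one_pos (Real.sqrt_nonneg _)))
    have hF : HasDerivAt F
        (qd + 2 * ((0 + (0 - Real.exp (-q x) * (-qd)) / (2 * Real.sqrt (1 - Real.exp (-q x)))) /
          (1 + Real.sqrt (1 - Real.exp (-q x)))) - 1 * B) x := by
      exact (hq.add (hl.const_mul 2)).sub ((hasDerivAt_id x).mul_const B)
    refine ⟨_, hF, ?_⟩
    have heq : qd + 2 * ((0 + (0 - Real.exp (-q x) * (-qd)) / (2 * Real.sqrt (1 - Real.exp (-q x)))) /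
          (1 + Real.sqrt (1 - Real.exp (-q x)))) = qd / y := by
      rw [← hedef, ← hydef]
      have hee : e = 1 - y^2 := by linarith
      rw [hee]
      have h1y : (0:ℝ) < 1 + y := by linarith
      field_simp
      ring
    rw [heq, one_mul]
    have : B ≤ qd / y := (le_div_iff₀ hy).mpr (by linarith [key3])
    linarith
  -- F is monotone on [0,1]
  have hFc : ContinuousOn F (Icc (0:ℝ) 1) := by
    have hqc : Continuous q := by
      exact (continuous_const.mul (continuous_const.sub hdf.continuous)).div_const M
    have hin : Continuous (fun τ => 1 + Real.sqrt (1 - Real.exp (-q τ))) := by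
      continuity
    have hlogc : Continuous (fun τ => Real.log (1 + Real.sqrt (1 - Real.exp (-q τ)))) := by
      apply hin.log
      intro τ
      have := Real.sqrt_nonneg (1 - Real.exp (-q τ))
      positivity
    exact ((hqc.add ((continuous_const.mul hlogc))).sub (continuous_id.mul continuous_const)).continuousOn
  have hFmono : MonotoneOn F (Icc (0:ℝ) 1) := by
    apply monotoneOn_of_deriv_nonneg (convex_Icc 0 1) hFc
    · intro x hx
      rw [interior_Icc] at hx
      obtain ⟨d, hd, _⟩ := hFd x hx
      exact hd.differentiableAt.differentiableWithinAt
    · intro x hx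
      rw [interior_Icc] at hx
      obtain ⟨d, hd, hd0⟩ := hFd x hx
      rw [hd.deriv]
      exact hd0
  -- conclude
  intro t ht
  have hF0 : F 0 = 0 := by
    simp only [hFdef, hqdef, ← hMdef]
    norm_num
  have h01 : (0:ℝ) ∈ Icc (0:ℝ) 1 := by norm_num
  have hFt := hFmono h01 ht ht.1
  rw [hF0] at hFt
  -- F t ≤ q t + 2 log 2 - t * B
  have hyle : Real.sqrt (1 - Real.exp (-q t)) ≤ 1 := by
    rw [Real.sqrt_le_one]
    have := Real.exp_pos (-q t)
    linarith
  have hlogle : Real.log (1 + Real.sqrt (1 - Real.exp (-q t))) ≤ Real.log 2 := by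
    apply Real.log_le_log (by positivity)
    linarith
  have : 0 ≤ q t + 2 * Real.log 2 - t * B := by
    simp only [hFdef] at hFt
    linarith
  simp only [hqdef] at this
  linarith


lemma W_aux (s : ℝ) :
    -(3 * Real.sqrt 2) * |s| ≤ Real.log (4 * Real.exp (Real.sqrt 2 * s) /
      (1 + Real.exp (Real.sqrt 2 * s)) ^ 2) := by
  set x := Real.sqrt 2 * s with hx
  have hex : 0 < Real.exp x := Real.exp_pos x
  have hWeq : Real.log (4 * Real.exp x / (1 + Real.exp x) ^ 2)
      = Real.log 4 + x - 2 * Real.log (1 + Real.exp x) := by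
    rw [Real.log_div (by positivity) (by positivity),
      Real.log_mul (by norm_num) (Real.exp_ne_zero x), Real.log_exp, Real.log_pow]
    push_cast; ring
  have hlog4 : Real.log 4 = 2 * Real.log 2 := by
    rw [show (4:ℝ) = 2^2 by norm_num, Real.log_pow]; push_cast; ring
  have h2 : 1 + Real.exp x ≤ 2 * Real.exp |x| := by
    have ha := Real.exp_le_exp.mpr (le_abs_self x)
    have hb := Real.add_one_le_exp |x|
    have := abs_nonneg x
    linarith
  have h1 : Real.log (1 + Real.exp x) ≤ Real.log 2 + |x| := by
    calc Real.log (1 + Real.exp x) ≤ Real.log (2 * Real.exp |x|) :=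
          Real.log_le_log (by positivity) h2
      _ = Real.log 2 + |x| := by
          rw [Real.log_mul (by norm_num) (Real.exp_ne_zero _), Real.log_exp]
  have hxabs : |x| = Real.sqrt 2 * |s| := by
    rw [hx, abs_mul, abs_of_nonneg (Real.sqrt_nonneg 2)]
  have hxx : -|x| ≤ x := neg_abs_le x
  rw [hWeq, hlog4]
  linarith [h1, hxx, hxabs.le, hxabs.ge]


/-- `u` is the (unique) positive solution of the one-dimensional Lane–Emden problem
`-u'' = u^p` on `(-1,1)` with `u(-1) = u(1) = 0`; it is even, positive on `(-1,1)`,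
decreasing on `[0,1]`, and its sup norm is attained at `0`. -/
def IsLaneEmden (p : ℝ) (u : ℝ → ℝ) : Prop :=
  ContDiff ℝ 2 u ∧
  (∀ t ∈ Ioo (-1 : ℝ) 1, deriv (deriv u) t = -(u t ^ p)) ∧
  u (-1) = 0 ∧ u 1 = 0 ∧
  (∀ t ∈ Ioo (-1 : ℝ) 1, 0 < u t) ∧
  (∀ t : ℝ, u (-t) = u t) ∧
  (∀ ⦃s t : ℝ⦄, s ∈ Icc (0 : ℝ) 1 → t ∈ Icc (0 : ℝ) 1 → s ≤ t → u t ≤ u s) ∧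
  (∀ t ∈ Icc (-1 : ℝ) 1, u t ≤ u 0)

/-- The rescaling parameter `μ_p = (p ‖u_p‖_∞^(p-1))^(-1/2)`. -/
def mup (u : ℝ → ℝ → ℝ) (p : ℝ) : ℝ := (p * u p 0 ^ (p - 1)) ^ (-(1 / 2) : ℝ)

/-- The rescaled function `ũ_p(s) = p (u_p(μ_p s) - u_p(0)) / u_p(0)`. -/
def utilde (u : ℝ → ℝ → ℝ) (p : ℝ) (s : ℝ) : ℝ :=
  p * (u p (mup u p * s) - u p 0) / u p 0

/-- The limit profile `W(s) = log( 4 e^{√2 s} / (1 + e^{√2 s})² )`. -/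
def W (s : ℝ) : ℝ :=
  Real.log (4 * Real.exp (Real.sqrt 2 * s) / (1 + Real.exp (Real.sqrt 2 * s)) ^ 2)

/-- Decay estimate: `ũ_p ≤ C₁ W + C₂` on `[-1/μ_p, 1/μ_p]` for `p` large. -/
theorem rescaled_decay_estimate
    (u : ℝ → ℝ → ℝ) (hu : ∀ p : ℝ, 1 < p → IsLaneEmden p (u p)) :
    ∃ C₁ > (0 : ℝ), ∃ C₂ > (0 : ℝ), ∃ p₀ > (1 : ℝ), ∀ p ≥ p₀,
      ∀ s : ℝ, |s| ≤ 1 / mup u p → utilde u p s ≤ C₁ * W s + C₂ := by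
  have hlog2 : 0 < Real.log 2 := Real.log_pos (by norm_num)
  refine ⟨Real.sqrt 2 / 6, by positivity, 2 * Real.log 2, by linarith, 2, by norm_num, ?_⟩
  intro p hp s hs
  obtain ⟨hC, hODE, hm1, h1, hpos, heven, hmono, hmax⟩ := hu p (by linarith)
  have hp0 : (0:ℝ) < p := by linarith
  have hM : 0 < u p 0 := hpos 0 (by norm_num)
  have hMP : 0 < u p 0 ^ (p-1) := Real.rpow_pos_of_pos hM _
  have hA : 0 < p * u p 0 ^ (p-1) := by positivity
  have hmu : 0 < mup u p := Real.rpow_pos_of_pos hA _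
  have hmuB : mup u p * Real.sqrt (p * u p 0 ^ (p-1)) = 1 := by
    rw [mup, Real.sqrt_eq_rpow, ← Real.rpow_add hA]
    norm_num
  set t := mup u p * |s| with htdef
  have ht1 : t ≤ 1 := by
    calc t ≤ mup u p * (1 / mup u p) := mul_le_mul_of_nonneg_left hs hmu.le
      _ = 1 := by field_simp
  have ht : t ∈ Icc (0:ℝ) 1 := ⟨by positivity, ht1⟩
  have hkey := key_growth p hp (u p) hC hODE hpos heven t ht
  have htB : t * Real.sqrt (p * u p 0 ^ (p-1)) = |s| := by
    rw [htdef, show mup u p * |s| * Real.sqrt (p * u p 0 ^ (p-1))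
      = (mup u p * Real.sqrt (p * u p 0 ^ (p-1))) * |s| by ring, hmuB, one_mul]
  have hfs : u p (mup u p * s) = u p t := by
    rcases abs_cases s with ⟨h, _⟩ | ⟨h, _⟩
    · rw [htdef, h]
    · rw [htdef, h, show mup u p * -s = -(mup u p * s) by ring, heven]
  have hub : utilde u p s ≤ -|s| + 2 * Real.log 2 := by
    rw [utilde, hfs]
    rw [htB] at hkey
    have : p * (u p t - u p 0) / u p 0 = -(p * (u p 0 - u p t) / u p 0) := by ring
    rw [this]
    linarith
  have hW := W_aux s
  have hC1 : (0:ℝ) ≤ Real.sqrt 2 / 6 := by positivity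
  have hWm := mul_le_mul_of_nonneg_left hW hC1
  have hss : Real.sqrt 2 * Real.sqrt 2 = 2 := Real.mul_self_sqrt (by norm_num)
  have e1 : Real.sqrt 2 / 6 * (-(3 * Real.sqrt 2) * |s|) = -|s| := by
    linear_combination (-(|s|)/2) * hss
  rw [W]
  linarith [hWm, e1, hub]
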